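/- Gauss's summation theorem: for complex a, b, c with Re(c − a − b) > 0 and c not a nonpositive integer, ∑_{n=0}^∞ (a)_n(b)_n/(n!(c)_n) = Γ(c)Γ(c−a−b)/(Γ(c−a)Γ(c−b)). -/

import Mathlib

/-- The Pochhammer symbol (rising factorial) (a)_n. -/
noncomputable def poch (a : ℂ) (n : ℕ) : ℂ := (ascPochhammer ℂ n).eval a

open scoped Topology

lemma poch_zero (a : ℂ) : poch a 0 = 1 := by simp [poch]

lemma poch_succ (a : ℂ) (n : ℕ) : poch a (n + 1) = poch a n * (a + n) := by
  simp [poch, ascPochhammer_succ_eval]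

lemma poch_succ_left (a : ℂ) (n : ℕ) : poch a (n + 1) = a * poch (a + 1) n := by
  simp [poch, ascPochhammer_succ_left, Polynomial.eval_comp, Polynomial.eval_mul]

lemma poch_ne_zero {x : ℂ} (hx : ∀ n : ℕ, x ≠ -(n : ℂ)) (n : ℕ) : poch x n ≠ 0 := by
  induction n with
  | zero => simp [poch_zero]
  | succ n ih =>
    rw [poch_succ]
    refine mul_ne_zero ih ?_
    intro h
    exact hx n (by linear_combination h)

noncomputable def pr (a : ℝ) (n : ℕ) : ℝ := (ascPochhammer ℝ n).eval a

lemma pr_zero (a : ℝ) : pr a 0 = 1 := by simp [pr]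

lemma pr_succ (a : ℝ) (n : ℕ) : pr a (n + 1) = pr a n * (a + n) := by
  simp [pr, ascPochhammer_succ_eval]

lemma pr_pos {a : ℝ} (ha : 0 < a) (n : ℕ) : 0 < pr a n := by
  induction n with
  | zero => simp [pr_zero]
  | succ n ih => rw [pr_succ]; positivity

lemma norm_poch_le (a : ℂ) (n : ℕ) : ‖poch a n‖ ≤ pr ‖a‖ n := by
  induction n with
  | zero => simp [poch_zero, pr_zero]
  | succ n ih =>
    rw [poch_succ, pr_succ, norm_mul]
    refine mul_le_mul ih ?_ (norm_nonneg _) ((norm_nonneg _).trans ih)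
    calc ‖a + (n:ℂ)‖ ≤ ‖a‖ + ‖(n:ℂ)‖ := norm_add_le _ _
    _ = ‖a‖ + n := by simp

open Filter Real in
lemma log_one_add_le {u : ℝ} (h : -1 < u) : Real.log (1 + u) ≤ u := by
  have := Real.log_le_sub_one_of_pos (x := 1 + u) (by linarith)
  linarith

open Filter Real in
lemma le_log_one_add {u : ℝ} (h : -1 < u) : u / (1 + u) ≤ Real.log (1 + u) := by
  have h0 : (0:ℝ) < 1 + u := by linarith
  have := Real.log_le_sub_one_of_pos (x := (1 + u)⁻¹) (by positivity)
  rw [Real.log_inv] at this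
  have : -(1+u)⁻¹ + 1 ≤ Real.log (1+u) := by linarith
  calc u / (1+u) = -(1+u)⁻¹ + 1 := by field_simp; ring
  _ ≤ _ := this

/-- Upper bound for `log A` where `A² = n² + 2rn + s`. -/
lemma log_upper {nR A r s : ℝ} (h1 : 1 ≤ nR) (hA : 0 < A)
    (hA2 : A^2 = nR^2 + 2*r*nR + s) :
    Real.log A ≤ Real.log nR + r/nR + s/(2*nR^2) := by
  have hn : 0 < nR := by linarith
  set α : ℝ := (2*r*nR + s)/nR^2 with hα
  have hA2' : A^2 = nR^2 * (1 + α) := by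
    have hαm : nR^2 * α = 2*r*nR + s := by rw [hα]; field_simp
    linear_combination hA2 - hαm
  have hαgt : -1 < α := by
    have hApos : (0:ℝ) < A^2 := by positivity
    rw [hA2'] at hApos
    nlinarith [sq_nonneg nR]
  have hlog : 2 * Real.log A = 2 * Real.log nR + Real.log (1+α) := by
    have e1 : Real.log (A^2) = Real.log (nR^2) + Real.log (1+α) := by
      rw [hA2', Real.log_mul (by positivity) (by linarith : (0:ℝ) < 1 + α).ne']
    have e2 : Real.log (A^2) = 2 * Real.log A := by rw [Real.log_pow]; push_cast; ring
    have e3 : Real.log (nR^2) = 2 * Real.log nR := by rw [Real.log_pow]; push_cast; ring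
    rw [e2, e3] at e1; exact e1
  have h4 := log_one_add_le hαgt
  have h5 : α = 2*(r/nR) + (s/(2*nR^2))*2 := by rw [hα]; field_simp
  linarith [hlog, h4, h5.symm.le, h5.le]

/-- Lower bound for `log A` where `A² = n² + 2rn + s`, assuming `A² ≥ n²/2`. -/
lemma log_lower {nR A r s : ℝ} (h1 : 1 ≤ nR) (hA : 0 < A)
    (hA2 : A^2 = nR^2 + 2*r*nR + s) (hhalf : nR^2/2 ≤ A^2) (hs : 0 ≤ s) :
    Real.log nR + r/nR - (2 * |r| + s)^2/nR^2 ≤ Real.log A := by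
  have hn : 0 < nR := by linarith
  have hnR2 : (0:ℝ) < nR^2 := by positivity
  set α : ℝ := (2*r*nR + s)/nR^2 with hα
  have hA2' : A^2 = nR^2 * (1 + α) := by
    have hαm : nR^2 * α = 2*r*nR + s := by rw [hα]; field_simp
    linear_combination hA2 - hαm
  have hαhalf : (1:ℝ)/2 ≤ 1 + α := by
    have h0 : nR^2 * (1/2) ≤ nR^2 * (1+α) := by rw [← hA2']; linarith
    have := le_of_mul_le_mul_left h0 hnR2
    linarith
  have hαgt : -1 < α := by linarith
  have h4 := le_log_one_add hαgt
  have h2r : |2*r*nR| = 2 * |r| * nR := by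
    rw [abs_mul, abs_mul, abs_two, abs_of_pos hn]
  have habs1 : |2*r*nR + s| ≤ 2 * |r| * nR + s := by
    have h := abs_add_le (2*r*nR) s
    rw [h2r, abs_of_nonneg hs] at h
    exact h
  have hαabs : |α| ≤ (2 * |r| + s)/nR := by
    rw [hα, abs_div, abs_of_pos hnR2, div_le_div_iff₀ hnR2 hn]
    have hsnn : s * nR ≤ s * nR^2 := by nlinarith [mul_nonneg (mul_nonneg hs hn.le) (by linarith : (0:ℝ) ≤ nR - 1)]
    have h6 := mul_le_mul_of_nonneg_right habs1 hn.le
    nlinarith [abs_nonneg r]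
  have hquot : α - 2*α^2 ≤ α/(1+α) := by
    have h3 : (0:ℝ) < 1 + α := by linarith
    have heq : α/(1+α) - (α - 2*α^2) = α^2 * (2*(1+α) - 1)/(1+α) := by
      field_simp
      ring
    have hpos : (0:ℝ) ≤ α^2 * (2*(1+α) - 1)/(1+α) := by
      have h2 : (0:ℝ) ≤ 2*(1+α) - 1 := by linarith
      positivity
    linarith [heq ▸ hpos]
  have hα2 : α^2 ≤ ((2 * |r| + s)/nR)^2 := by
    have h7 := sq_abs α
    nlinarith [abs_nonneg α, hαabs]
  have hq2 : ((2 * |r| + s)/nR)^2 ≤ (2 * |r| + s)^2/nR^2 := by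
    rw [div_pow]
  have hlog : 2 * Real.log A = 2 * Real.log nR + Real.log (1+α) := by
    have e1 : Real.log (A^2) = Real.log (nR^2) + Real.log (1+α) := by
      rw [hA2', Real.log_mul (by positivity) (by linarith : (0:ℝ) < 1 + α).ne']
    have e2 : Real.log (A^2) = 2 * Real.log A := by rw [Real.log_pow]; push_cast; ring
    have e3 : Real.log (nR^2) = 2 * Real.log nR := by rw [Real.log_pow]; push_cast; ring
    rw [e2, e3] at e1; exact e1
  have h5 : α = 2*(r/nR) + s/nR^2 := by rw [hα]; field_simp
  have hsn : 0 ≤ s/nR^2 := by positivity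
  linarith [hlog, h4, hquot, hα2, hq2]

noncomputable def hterm (a b x : ℂ) (n : ℕ) : ℂ :=
  poch a n * poch b n / ((Nat.factorial n : ℂ) * poch x n)

lemma hterm_zero (a b x : ℂ) : hterm a b x 0 = 1 := by
  simp [hterm, poch_zero]

lemma hterm_succ {x : ℂ} (hx : ∀ n : ℕ, x ≠ -(n : ℂ)) (a b : ℂ) (n : ℕ) :
    hterm a b x (n+1) * (((n:ℂ)+1) * (x+n)) = hterm a b x n * ((a+n)*(b+n)) := by
  have hfac : ((Nat.factorial n : ℂ)) ≠ 0 := by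
    exact_mod_cast Nat.cast_ne_zero.2 (Nat.factorial_ne_zero n)
  have hp := poch_ne_zero hx n
  have hp1 := poch_ne_zero hx (n+1)
  have hxn : x + (n:ℂ) ≠ 0 := fun h => hx n (by linear_combination h)
  have hn1 : ((n:ℂ)+1) ≠ 0 := by
    have h' : ((n+1:ℕ):ℂ) ≠ 0 := Nat.cast_ne_zero.2 (Nat.succ_ne_zero n)
    push_cast at h'
    exact h' 
  rw [hterm, hterm, poch_succ, poch_succ, poch_succ]
  have hfac1 : ((Nat.factorial (n+1) : ℂ)) = ((n:ℂ)+1) * (Nat.factorial n : ℂ) := by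
    push_cast [Nat.factorial_succ]; ring
  rw [hfac1]
  field_simp [hfac, hp, hxn, hn1]

lemma norm_hterm_succ {x : ℂ} (hx : ∀ n : ℕ, x ≠ -(n : ℂ)) (a b : ℂ) (n : ℕ) :
    ‖hterm a b x (n+1)‖ * (((n:ℝ)+1) * ‖x+n‖) = ‖hterm a b x n‖ * (‖a+n‖*‖b+n‖) := by
  have h := congrArg norm (hterm_succ hx a b n)
  have e : ‖((n:ℂ)+1)‖ = (n:ℝ)+1 := by
    rw [show ((n:ℂ)+1) = ((n+1:ℕ):ℂ) by push_cast; ring, Complex.norm_natCast]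
    push_cast; ring
  simpa [norm_mul, e] using h

set_option maxHeartbeats 2000000 in
open Filter in
lemma ratio_eventually (a b x : ℂ) (hx : ∀ n : ℕ, x ≠ -(n : ℂ)) {p : ℝ} (hp : 0 < p)
    (hlt : p < 1 + (x - a - b).re) :
    ∀ᶠ n : ℕ in atTop,
      ((n:ℝ)+1)^p * (‖a+(n:ℂ)‖*‖b+(n:ℂ)‖) ≤ (n:ℝ)^p * (((n:ℝ)+1) * ‖x+(n:ℂ)‖) := by
  set δ : ℝ := 1 + (x - a - b).re - p with hδdef
  have hδ : 0 < δ := by simp only [hδdef]; linarith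
  set Kx : ℝ := (2 * |x.re| + ‖x‖^2)^2 with hKx
  have hKxnn : (0:ℝ) ≤ Kx := by positivity
  set D : ℝ := p/2 + ‖a‖^2/2 + ‖b‖^2/2 + 9 + Kx + 1 with hD
  have hDpos : 0 < D := by
    have ha2 : (0:ℝ) ≤ ‖a‖^2 := by positivity
    have hb2 : (0:ℝ) ≤ ‖b‖^2 := by positivity
    positivity
  have hcast := tendsto_natCast_atTop_atTop (R := ℝ)
  filter_upwards [hcast.eventually_ge_atTop 1, hcast.eventually_ge_atTop (4*‖x‖+4),
    hcast.eventually_ge_atTop (D/δ)] with n h1 h4x hDδ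
  set nR : ℝ := (n:ℝ) with hnR
  have hn : 0 < nR := by linarith
  have hnR2 : (0:ℝ) < nR^2 := by positivity
  have normsq : ∀ z : ℂ, ‖z + (n:ℂ)‖^2 = nR^2 + 2*z.re*nR + ‖z‖^2 := by
    intro z
    have h1' : ‖z + (n:ℂ)‖^2 = (z.re + nR)^2 + z.im^2 := by
      rw [Complex.sq_norm, Complex.normSq_apply]
      simp [hnR]
      ring
    have h2' : ‖z‖^2 = z.re^2 + z.im^2 := by
      rw [Complex.sq_norm, Complex.normSq_apply]
      ring
    rw [h1', h2']; ring
  have hxn : x + (n:ℂ) ≠ 0 := fun h => hx n (by linear_combination h)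
  have hxnpos : 0 < ‖x + (n:ℂ)‖ := norm_pos_iff.2 hxn
  have hxlow : nR - ‖x‖ ≤ ‖x + (n:ℂ)‖ := by
    have h' := norm_sub_norm_le ((n:ℂ)) (-x)
    have e : (n:ℂ) - (-x) = x + (n:ℂ) := by ring
    rw [e] at h'
    simpa [hnR] using h'
  have hxhalf : nR^2/2 ≤ ‖x + (n:ℂ)‖^2 := by
    have h34 : (3/4 : ℝ)*nR ≤ nR - ‖x‖ := by
      have : ‖x‖ ≤ nR/4 - 1 := by linarith
      linarith
    nlinarith [norm_nonneg x]
  by_cases hzero : ‖a + (n:ℂ)‖ * ‖b + (n:ℂ)‖ = 0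
  · rw [hzero]
    have : (0:ℝ) ≤ (n:ℝ)^p * (((n:ℝ)+1) * ‖x+(n:ℂ)‖) := by positivity
    simpa using this
  · have hapos : 0 < ‖a + (n:ℂ)‖ := by
      rcases mul_ne_zero_iff.1 hzero with ⟨ha', _⟩
      exact lt_of_le_of_ne (norm_nonneg _) (Ne.symm ha')
    have hbpos : 0 < ‖b + (n:ℂ)‖ := by
      rcases mul_ne_zero_iff.1 hzero with ⟨_, hb'⟩
      exact lt_of_le_of_ne (norm_nonneg _) (Ne.symm hb')
    have hA := log_upper h1 hapos (normsq a)
    have hB := log_upper h1 hbpos (normsq b)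
    have hX := log_lower h1 hxnpos (normsq x) hxhalf (by positivity)
    have hsucc : (nR+1)^2 = nR^2 + 2*1*nR + 1 := by ring
    have hN1u := log_upper h1 (by linarith : (0:ℝ) < nR + 1) hsucc
    have hhs : nR^2/2 ≤ (nR+1)^2 := by rw [hsucc]; linarith
    have hN1l := log_lower h1 (by linarith : (0:ℝ) < nR + 1) hsucc hhs (by norm_num)
    have h9 : (2 * |(1:ℝ)| + 1)^2 = (9:ℝ) := by norm_num
    rw [h9] at hN1l
    have hN1up := mul_le_mul_of_nonneg_left hN1u hp.le
    -- numeric core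
    have hδnR : D ≤ δ * nR := by
      rw [div_le_iff₀ hδ] at hDδ
      linarith
    have hre : (x - a - b).re = x.re - a.re - b.re := by simp
    have hpoly : (p + a.re + b.re - x.re - 1) * nR + (p/2 + ‖a‖^2/2 + ‖b‖^2/2 + 9 + Kx) ≤ 0 := by
      have e2 : (p + a.re + b.re - x.re - 1) * nR = -(δ * nR) := by
        rw [hδdef, hre]; ring
      rw [e2, hD] at *
      linarith
    have hnum : p * (1/nR) + p * (1/(2*nR^2)) + (a.re/nR + ‖a‖^2/(2*nR^2))
        + (b.re/nR + ‖b‖^2/(2*nR^2))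
        ≤ 1/nR - 9/nR^2 + (x.re/nR - Kx/nR^2) := by
      have key : (1/nR - 9/nR^2 + (x.re/nR - Kx/nR^2))
          - (p * (1/nR) + p * (1/(2*nR^2)) + (a.re/nR + ‖a‖^2/(2*nR^2))
             + (b.re/nR + ‖b‖^2/(2*nR^2)))
          = -((p + a.re + b.re - x.re - 1) * nR + (p/2 + ‖a‖^2/2 + ‖b‖^2/2 + 9 + Kx)) / nR^2 := by
        field_simp
        ring
      have hquotnn : (0:ℝ) ≤ -((p + a.re + b.re - x.re - 1) * nR + (p/2 + ‖a‖^2/2 + ‖b‖^2/2 + 9 + Kx)) / nR^2 := by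
        apply div_nonneg _ hnR2.le
        linarith
      linarith [key ▸ hquotnn]
    have main : Real.log ((nR+1)^p * (‖a+(n:ℂ)‖*‖b+(n:ℂ)‖))
        ≤ Real.log (nR^p * ((nR+1) * ‖x+(n:ℂ)‖)) := by
      have eL : Real.log ((nR+1)^p * (‖a+(n:ℂ)‖*‖b+(n:ℂ)‖))
          = p * Real.log (nR+1) + (Real.log ‖a+(n:ℂ)‖ + Real.log ‖b+(n:ℂ)‖) := by
        rw [Real.log_mul (by positivity) (mul_pos hapos hbpos).ne',
            Real.log_mul hapos.ne' hbpos.ne', Real.log_rpow (by linarith)]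
      have eR : Real.log (nR^p * ((nR+1) * ‖x+(n:ℂ)‖))
          = p * Real.log nR + (Real.log (nR+1) + Real.log ‖x+(n:ℂ)‖) := by
        rw [Real.log_mul (by positivity) (by positivity : (0:ℝ) < (nR+1)*‖x+(n:ℂ)‖).ne',
            Real.log_mul (by linarith : (0:ℝ) < nR+1).ne' hxnpos.ne', Real.log_rpow hn]
      rw [eL, eR]
      linarith [hN1up, hA, hB, hX, hN1l, hnum]
    have hLpos : 0 < (nR+1)^p * (‖a+(n:ℂ)‖*‖b+(n:ℂ)‖) := by positivity
    have hRpos : 0 < nR^p * ((nR+1) * ‖x+(n:ℂ)‖) := by positivity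
    exact (Real.log_le_log_iff hLpos hRpos).1 main

open Filter in
lemma term_bound (a b x : ℂ) (hx : ∀ n : ℕ, x ≠ -(n : ℂ)) {p : ℝ} (hp : 0 < p)
    (hlt : p < 1 + (x - a - b).re) :
    ∃ C : ℝ, 0 ≤ C ∧ ∀ n : ℕ, 1 ≤ n → ‖hterm a b x n‖ ≤ C * (n:ℝ)^(-p) := by
  obtain ⟨N₀, hN₀⟩ := eventually_atTop.1 (ratio_eventually a b x hx hp hlt)
  set N := max N₀ 1 with hN
  have hN1 : 1 ≤ N := le_max_right _ _
  have step : ∀ n, N ≤ n → ((n:ℝ)+1)^p * ‖hterm a b x (n+1)‖ ≤ (n:ℝ)^p * ‖hterm a b x n‖ := by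
    intro n hn
    have hrat := hN₀ n (le_trans (le_max_left _ _) hn)
    have hrec := norm_hterm_succ hx a b n
    have hnpos : (0:ℝ) < (n:ℝ) := by
      have : 1 ≤ n := le_trans hN1 hn
      exact_mod_cast this
    have hxn : x + (n:ℂ) ≠ 0 := fun h => hx n (by linear_combination h)
    have hR : (0:ℝ) < ((n:ℝ)+1) * ‖x+(n:ℂ)‖ := by
      have := norm_pos_iff.2 hxn
      positivity
    have key : (((n:ℝ)+1)^p * ‖hterm a b x (n+1)‖) * (((n:ℝ)+1) * ‖x+(n:ℂ)‖)
        ≤ ((n:ℝ)^p * ‖hterm a b x n‖) * (((n:ℝ)+1) * ‖x+(n:ℂ)‖) := by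
      calc (((n:ℝ)+1)^p * ‖hterm a b x (n+1)‖) * (((n:ℝ)+1) * ‖x+(n:ℂ)‖)
          = ((n:ℝ)+1)^p * (‖hterm a b x (n+1)‖ * (((n:ℝ)+1) * ‖x+(n:ℂ)‖)) := by ring
      _ = ((n:ℝ)+1)^p * (‖hterm a b x n‖ * (‖a+(n:ℂ)‖*‖b+(n:ℂ)‖)) := by rw [hrec]
      _ = ‖hterm a b x n‖ * (((n:ℝ)+1)^p * (‖a+(n:ℂ)‖*‖b+(n:ℂ)‖)) := by ring
      _ ≤ ‖hterm a b x n‖ * ((n:ℝ)^p * (((n:ℝ)+1) * ‖x+(n:ℂ)‖)) := by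
          exact mul_le_mul_of_nonneg_left hrat (norm_nonneg _)
      _ = ((n:ℝ)^p * ‖hterm a b x n‖) * (((n:ℝ)+1) * ‖x+(n:ℂ)‖) := by ring
    exact le_of_mul_le_mul_right key hR
  have mono : ∀ n, N ≤ n → (n:ℝ)^p * ‖hterm a b x n‖ ≤ (N:ℝ)^p * ‖hterm a b x N‖ := by
    intro n hn
    induction n, hn using Nat.le_induction with
    | base => exact le_rfl
    | succ n hn ih =>
      have := step n hn
      have e : ((n:ℝ)+1) = ((n+1:ℕ):ℝ) := by push_cast; ring
      rw [e] at this
      linarith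
  set C : ℝ := ∑ k ∈ Finset.range (N+1), (k:ℝ)^p * ‖hterm a b x k‖ with hC
  have hCnn : 0 ≤ C := Finset.sum_nonneg fun k _ => by positivity
  have hterm_le : ∀ k, k ∈ Finset.range (N+1) → (k:ℝ)^p * ‖hterm a b x k‖ ≤ C := by
    intro k hk
    rw [hC]
    exact Finset.single_le_sum (f := fun k : ℕ => (k:ℝ)^p * ‖hterm a b x k‖)
      (fun i _ => by positivity) hk
  have hbound : ∀ n : ℕ, 1 ≤ n → (n:ℝ)^p * ‖hterm a b x n‖ ≤ C := by
    intro n hn1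
    by_cases hcase : n ≤ N
    · exact hterm_le n (Finset.mem_range.2 (by omega))
    · push_neg at hcase
      have h1 := mono n (le_of_lt hcase)
      have h2 := hterm_le N (Finset.mem_range.2 (by omega))
      linarith
  refine ⟨C, hCnn, fun n hn1 => ?_⟩
  have hnpos : (0:ℝ) < (n:ℝ) := by exact_mod_cast hn1
  have hnp : (0:ℝ) < (n:ℝ)^p := Real.rpow_pos_of_pos hnpos p
  rw [Real.rpow_neg hnpos.le, ← div_eq_mul_inv, le_div_iff₀ hnp]
  calc ‖hterm a b x n‖ * (n:ℝ)^p = (n:ℝ)^p * ‖hterm a b x n‖ := by ring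
  _ ≤ C := hbound n hn1

lemma summable_hterm (a b x : ℂ) (hx : ∀ n : ℕ, x ≠ -(n : ℂ)) (h : 0 < (x - a - b).re) :
    Summable (hterm a b x) := by
  set p : ℝ := 1 + (x - a - b).re/2 with hpdef
  have hp : 0 < p := by simp only [hpdef]; linarith
  have hp1 : 1 < p := by simp only [hpdef]; linarith
  have hlt : p < 1 + (x - a - b).re := by simp only [hpdef]; linarith
  obtain ⟨C, hCnn, hCb⟩ := term_bound a b x hx hp hlt
  rw [← summable_norm_iff]
  rw [← summable_nat_add_iff 1]
  have hsum : Summable (fun n : ℕ => C * ((n+1:ℕ):ℝ)^(-p)) := by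
    have h0 : Summable (fun n : ℕ => ((n:ℝ))^(-p)) := by
      rw [Real.summable_nat_rpow]
      linarith
    exact ((summable_nat_add_iff 1).2 h0).mul_left C
  refine Summable.of_nonneg_of_le (fun n => norm_nonneg _) (fun n => ?_) hsum
  exact hCb (n+1) (by omega)

open Filter in
lemma key_step (a b c : ℂ) (hc : ∀ n : ℕ, c ≠ -(n:ℂ)) (h : 0 < (c - a - b).re) :
    c * (c - a - b) * ∑' n, hterm a b c n
      = (c-a)*(c-b) * ∑' n, hterm a b (c+1) n := by
  have hc1 : ∀ n : ℕ, c + 1 ≠ -(n:ℂ) := by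
    intro n h'
    apply hc (n+1)
    push_cast
    linear_combination h'
  have h1 : 0 < (c + 1 - a - b).re := by
    have e : (c + 1 - a - b) = (c - a - b) + 1 := by ring
    rw [e, Complex.add_re, Complex.one_re]
    linarith
  have hsum0 : Summable (hterm a b c) := summable_hterm a b c hc h
  have hsum1 : Summable (hterm a b (c+1)) := summable_hterm a b (c+1) hc1 h1
  set t : ℕ → ℂ := hterm a b (c+1) with ht
  set g : ℕ → ℂ := fun n => -(n:ℂ)*(c+n) * t n with hg
  have claim_rel : ∀ n : ℕ, (c+(n:ℂ)) * t n = c * hterm a b c n := by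
    intro n
    have e1 : poch c n * (c+(n:ℂ)) = c * poch (c+1) n := by
      rw [← poch_succ, poch_succ_left]
    have hfac : ((Nat.factorial n : ℂ)) ≠ 0 :=
      Nat.cast_ne_zero.2 (Nat.factorial_ne_zero n)
    have hpc := poch_ne_zero hc n
    have hpc1 := poch_ne_zero hc1 n
    rw [ht, hterm, hterm]
    field_simp
    linear_combination (poch a n * poch b n) * e1
  have claim_tel : ∀ n : ℕ, g (n+1) - g n
      = c*(c-a-b) * hterm a b c n - (c-a)*(c-b) * t n := by
    intro n
    have hrec := hterm_succ hc1 a b n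
    have hrel := claim_rel n
    rw [hg]
    simp only
    push_cast
    linear_combination (-1 : ℂ) * hrec + (c-a-b) * hrel
  have hgzero : g 0 = 0 := by simp [hg]
  -- g tends to 0
  have hgtend : Tendsto g atTop (𝓝 0) := by
    set p : ℝ := 2 + (c - a - b).re/2 with hpdef
    have hp : 0 < p := by simp only [hpdef]; linarith
    have hlt : p < 1 + (c + 1 - a - b).re := by
      have e : (c + 1 - a - b) = (c - a - b) + 1 := by ring
      rw [e, Complex.add_re, Complex.one_re]
      simp only [hpdef]
      linarith
    obtain ⟨C, hCnn, hCb⟩ := term_bound a b (c+1) hc1 hp hlt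
    rw [tendsto_zero_iff_norm_tendsto_zero]
    apply squeeze_zero' (Filter.Eventually.of_forall fun n => norm_nonneg _)
      (g := fun n : ℕ => (C * (1 + ‖c‖)) * (n:ℝ)^(2-p))
    · rw [eventually_atTop]
      refine ⟨1, fun n hn => ?_⟩
      have hnpos : (0:ℝ) < (n:ℝ) := by exact_mod_cast hn
      have hb := hCb n hn
      have hnormg : ‖g n‖ = (n:ℝ) * ‖c+(n:ℂ)‖ * ‖t n‖ := by
        simp [hg, norm_mul]
        try ring
      have hcn : ‖c+(n:ℂ)‖ ≤ ‖c‖ + (n:ℝ) := by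
        calc ‖c+(n:ℂ)‖ ≤ ‖c‖ + ‖(n:ℂ)‖ := norm_add_le _ _
        _ = ‖c‖ + (n:ℝ) := by rw [Complex.norm_natCast]
      have h1n : (1:ℝ) ≤ (n:ℝ) := by exact_mod_cast hn
      have hcn2 : ‖c‖ + (n:ℝ) ≤ (1 + ‖c‖) * (n:ℝ) := by
        nlinarith [mul_nonneg (norm_nonneg c) (by linarith : (0:ℝ) ≤ (n:ℝ) - 1)]
      rw [hnormg]
      calc (n:ℝ) * ‖c+(n:ℂ)‖ * ‖t n‖ ≤ (n:ℝ) * ((1+‖c‖)*(n:ℝ)) * (C * (n:ℝ)^(-p)) := by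
            apply mul_le_mul _ hb (norm_nonneg _) (by positivity)
            apply mul_le_mul_of_nonneg_left (le_trans hcn hcn2) hnpos.le
      _ = (C * (1 + ‖c‖)) * ((n:ℝ)^(2:ℝ) * (n:ℝ)^(-p)) := by
            have hsq : (n:ℝ)^(2:ℝ) = (n:ℝ) * (n:ℝ) := by
              rw [show (2:ℝ) = ((2:ℕ):ℝ) by norm_num, Real.rpow_natCast]
              try ring
            rw [hsq]; ring
      _ = (C * (1 + ‖c‖)) * (n:ℝ)^(2-p) := by
            rw [← Real.rpow_add hnpos]
            rw [show (2:ℝ) + -p = 2 - p by ring]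
    · have h2p : (0:ℝ) < p - 2 := by simp only [hpdef]; linarith
      have h' : Tendsto (fun n : ℕ => ((n:ℝ))^(2-p)) atTop (𝓝 0) := by
        have := (tendsto_rpow_neg_atTop h2p).comp (tendsto_natCast_atTop_atTop (R := ℝ))
        simpa [Function.comp_def, show -(p-2) = 2-p by ring] using this
      simpa using h'.const_mul (C * (1 + ‖c‖))
  -- sum of differences is zero
  have hsumf : Summable (fun n => c*(c-a-b) * hterm a b c n - (c-a)*(c-b) * t n) :=
    (hsum0.mul_left _).sub (hsum1.mul_left _)
  have hsumf' : Summable (fun n => g (n+1) - g n) := by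
    apply hsumf.congr
    intro n
    exact (claim_tel n).symm
  have hpartial : ∀ N, ∑ n ∈ Finset.range N, (g (n+1) - g n) = g N := by
    intro N
    rw [Finset.sum_range_sub g, hgzero, sub_zero]
  have htend := hsumf'.hasSum.tendsto_sum_nat
  have htend2 : Tendsto (fun N => ∑ n ∈ Finset.range N, (g (n+1) - g n)) atTop (𝓝 0) := by
    simp only [hpartial]
    exact hgtend
  have hzero : ∑' n, (g (n+1) - g n) = 0 := tendsto_nhds_unique htend htend2
  have hexpand : ∑' n, (g (n+1) - g n)
      = c*(c-a-b) * ∑' n, hterm a b c n - (c-a)*(c-b) * ∑' n, t n := by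
    rw [tsum_congr claim_tel, Summable.tsum_sub (hsum0.mul_left _) (hsum1.mul_left _),
        tsum_mul_left, tsum_mul_left]
  rw [hexpand] at hzero
  linear_combination hzero

lemma poch_eq_prod (z : ℂ) (k : ℕ) : poch z k = ∏ j ∈ Finset.range k, (z + j) := by
  induction k with
  | zero => simp [poch_zero]
  | succ k ih => rw [poch_succ, Finset.prod_range_succ, ih]

lemma poch_real_cast (r : ℝ) (n : ℕ) : poch ((r:ℂ)) n = ((pr r n : ℝ) : ℂ) := by
  induction n with
  | zero => simp [poch_zero, pr_zero]
  | succ n ih => rw [poch_succ, pr_succ, ih]; push_cast; ring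

open Filter in
lemma iterate_step (a b c : ℂ) (hc : ∀ n : ℕ, c ≠ -(n:ℂ)) (h : 0 < (c - a - b).re) (m : ℕ) :
    poch c m * poch (c-a-b) m * ∑' n, hterm a b c n
      = poch (c-a) m * poch (c-b) m * ∑' n, hterm a b (c+(m:ℂ)) n := by
  induction m with
  | zero => simp [poch_zero]
  | succ m ih =>
    have hcm : ∀ n : ℕ, c + (m:ℂ) ≠ -(n:ℂ) := by
      intro n h'
      apply hc (n+m)
      push_cast
      linear_combination h'
    have hm : 0 < ((c+(m:ℂ)) - a - b).re := by
      have e : ((c+(m:ℂ)) - a - b) = (c - a - b) + (m:ℂ) := by ring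
      rw [e, Complex.add_re]
      have : (0:ℝ) ≤ ((m:ℂ)).re := by simp
      linarith
    have hk := key_step a b (c+(m:ℂ)) hcm hm
    have ecast : (c + ((m+1:ℕ):ℂ)) = (c + (m:ℂ)) + 1 := by push_cast; ring
    rw [show ((m+1:ℕ):ℂ) = (m:ℂ)+1 by push_cast; ring] at *
    rw [poch_succ, poch_succ, poch_succ, poch_succ]
    rw [show c + ((m:ℂ)+1) = (c + (m:ℂ)) + 1 by ring]
    linear_combination ((c+(m:ℂ)) * ((c+(m:ℂ)) - a - b)) * ih
      + (poch (c-a) m * poch (c-b) m) * hk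

set_option maxHeartbeats 2000000 in
open Filter in
lemma tail_tendsto (a b c : ℂ) (hc : ∀ n : ℕ, c ≠ -(n:ℂ)) (h : 0 < (c - a - b).re) :
    Tendsto (fun m : ℕ => ∑' n, hterm a b (c+(m:ℂ)) n) atTop (𝓝 1) := by
  obtain ⟨m₀, hm₀⟩ := exists_nat_gt (‖c‖ + ‖a‖ + ‖b‖ + 1)
  set M : ℝ := (m₀:ℝ) - ‖c‖ with hM
  have hMpos : ‖a‖ + ‖b‖ + 1 < M := by
    simp only [hM]
    linarith
  have hM0 : 0 < M := by
    have := norm_nonneg a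
    have := norm_nonneg b
    linarith
  have hMx : ∀ n : ℕ, (M:ℂ) ≠ -(n:ℂ) := by
    intro n h'
    have := congrArg Complex.re h'
    simp at this
    have hn0 : (0:ℝ) ≤ (n:ℝ) := by positivity
    linarith
  have hMre : 0 < ((M:ℂ) - (‖a‖:ℂ) - (‖b‖:ℂ)).re := by
    simp only [Complex.sub_re, Complex.ofReal_re]
    linarith
  have hsumM : Summable (hterm (‖a‖:ℂ) (‖b‖:ℂ) (M:ℂ)) :=
    summable_hterm _ _ _ hMx hMre
  have hsumM' : Summable (fun n => ‖hterm (‖a‖:ℂ) (‖b‖:ℂ) (M:ℂ) n‖) :=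
    summable_norm_iff.mpr hsumM
  set W : ℝ := ∑' n : ℕ, ‖hterm (‖a‖:ℂ) (‖b‖:ℂ) (M:ℂ) (n+1)‖ with hW
  have hsumM'' : Summable (fun n : ℕ => ‖hterm (‖a‖:ℂ) (‖b‖:ℂ) (M:ℂ) (n+1)‖) :=
    (summable_nat_add_iff 1).2 hsumM'
  have hWnn : 0 ≤ W := tsum_nonneg fun n => norm_nonneg _
  rw [tendsto_iff_norm_sub_tendsto_zero]
  apply squeeze_zero' (Filter.Eventually.of_forall fun m => norm_nonneg _)
    (g := fun m : ℕ => (M * W) * ((m:ℝ) - ‖c‖)⁻¹)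
  · rw [eventually_atTop]
    refine ⟨m₀ + 1, fun m hm => ?_⟩
    have hmm0 : (m₀:ℝ) ≤ (m:ℝ) := by exact_mod_cast Nat.le_of_succ_le hm
    have hmc : 0 < (m:ℝ) - ‖c‖ := by linarith
    have hcm : ∀ n : ℕ, c + (m:ℂ) ≠ -(n:ℂ) := by
      intro n h'
      apply hc (n+m)
      push_cast
      linear_combination h'
    have hmre : 0 < ((c+(m:ℂ)) - a - b).re := by
      have e : ((c+(m:ℂ)) - a - b) = (c - a - b) + (m:ℂ) := by ring
      rw [e, Complex.add_re]
      have : (0:ℝ) ≤ ((m:ℂ)).re := by simp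
      linarith
    have hsum : Summable (hterm a b (c+(m:ℂ))) := summable_hterm _ _ _ hcm hmre
    have hsumn : Summable (fun n => ‖hterm a b (c+(m:ℂ)) n‖) := summable_norm_iff.mpr hsum
    have hsumn1 : Summable (fun n : ℕ => ‖hterm a b (c+(m:ℂ)) (n+1)‖) :=
      (summable_nat_add_iff 1).2 hsumn
    -- pointwise bound
    have pochlow : ∀ n : ℕ, 1 ≤ n →
        ((m:ℝ) - ‖c‖)/M * pr M n ≤ ‖poch (c+(m:ℂ)) n‖ := by
      intro n hn
      induction n, hn using Nat.le_induction with
      | base =>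
        have e1 : pr M 1 = M := by rw [pr_succ, pr_zero]; norm_num
        have e2 : poch (c+(m:ℂ)) 1 = c + (m:ℂ) := by rw [poch_succ, poch_zero]; norm_num
        rw [e1, e2]
        have hlow : (m:ℝ) - ‖c‖ ≤ ‖c + (m:ℂ)‖ := by
          have h' := norm_sub_norm_le ((m:ℂ)) (-c)
          have e : (m:ℂ) - (-c) = c + (m:ℂ) := by ring
          rw [e] at h'
          simpa using h'
        calc ((m:ℝ) - ‖c‖)/M * M = (m:ℝ) - ‖c‖ := by field_simp
        _ ≤ ‖c + (m:ℂ)‖ := hlow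
      | succ n hn ih =>
        rw [pr_succ, poch_succ, norm_mul]
        have hstep : M + (n:ℝ) ≤ ‖c + (m:ℂ) + (n:ℂ)‖ := by
          have h' := norm_sub_norm_le ((m:ℂ)+(n:ℂ)) (-c)
          have e : ((m:ℂ)+(n:ℂ)) - (-c) = c + (m:ℂ) + (n:ℂ) := by ring
          rw [e] at h'
          rw [norm_neg] at h'
          have e2 : ‖(m:ℂ)+(n:ℂ)‖ = (m:ℝ)+(n:ℝ) := by
            rw [show (m:ℂ)+(n:ℂ) = ((m+n:ℕ):ℂ) by push_cast; ring, Complex.norm_natCast]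
            push_cast; ring
          rw [e2] at h'
          have := norm_nonneg c
          simp only [hM]
          linarith
        have hprM : 0 < pr M n := pr_pos hM0 n
        calc ((m:ℝ) - ‖c‖)/M * (pr M n * (M + (n:ℝ)))
            = (((m:ℝ) - ‖c‖)/M * pr M n) * (M + (n:ℝ)) := by ring
        _ ≤ ‖poch (c+(m:ℂ)) n‖ * ‖c + (m:ℂ) + (n:ℂ)‖ := by
            apply mul_le_mul ih hstep (by positivity) (norm_nonneg _)
        _ = ‖poch (c+(m:ℂ)) n‖ * ‖c + (m:ℂ) + (n:ℂ)‖ := rfl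
    have hprnn : ∀ (z : ℂ) (k : ℕ), 0 ≤ pr ‖z‖ k := fun z k =>
      le_trans (norm_nonneg (poch z k)) (norm_poch_le z k)
    have hval : ∀ k : ℕ, hterm (‖a‖:ℂ) (‖b‖:ℂ) (M:ℂ) k
        = ((pr ‖a‖ k * pr ‖b‖ k / ((k.factorial : ℝ) * pr M k) : ℝ) : ℂ) := by
      intro k
      rw [hterm, poch_real_cast, poch_real_cast, poch_real_cast]
      push_cast
      ring
    have hnormT : ∀ k : ℕ, ‖hterm (‖a‖:ℂ) (‖b‖:ℂ) (M:ℂ) k‖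
        = pr ‖a‖ k * pr ‖b‖ k / ((k.factorial:ℝ) * pr M k) := by
      intro k
      rw [hval k]
      have hfac : (0:ℝ) < (k.factorial : ℝ) := by positivity
      have hprM : 0 < pr M k := pr_pos hM0 k
      have hnum : 0 ≤ pr ‖a‖ k * pr ‖b‖ k := mul_nonneg (hprnn a k) (hprnn b k)
      rw [Complex.norm_real, Real.norm_eq_abs, abs_of_nonneg (by positivity)]
    have ptbound : ∀ n : ℕ,
        ‖hterm a b (c+(m:ℂ)) (n+1)‖
          ≤ M/((m:ℝ) - ‖c‖) * ‖hterm (‖a‖:ℂ) (‖b‖:ℂ) (M:ℂ) (n+1)‖ := by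
      intro n
      set k := n + 1 with hk
      have hk1 : 1 ≤ k := by omega
      have hplow := pochlow k hk1
      have hfac : (0:ℝ) < (k.factorial : ℝ) := by positivity
      have hprM : 0 < pr M k := pr_pos hM0 k
      have hlam : 0 < ((m:ℝ) - ‖c‖)/M := by positivity
      have hnorm_hterm : ‖hterm a b (c+(m:ℂ)) k‖
          = ‖poch a k‖ * ‖poch b k‖ / ((k.factorial:ℝ) * ‖poch (c+(m:ℂ)) k‖) := by
        rw [hterm, norm_div, norm_mul, norm_mul, Complex.norm_natCast]
      rw [hnorm_hterm, hnormT k]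
      have hd : 0 < (k.factorial:ℝ) * (((m:ℝ) - ‖c‖)/M * pr M k) := by positivity
      have hdle : (k.factorial:ℝ) * (((m:ℝ) - ‖c‖)/M * pr M k)
          ≤ (k.factorial:ℝ) * ‖poch (c+(m:ℂ)) k‖ :=
        mul_le_mul_of_nonneg_left hplow hfac.le
      have hnle : ‖poch a k‖ * ‖poch b k‖ ≤ pr ‖a‖ k * pr ‖b‖ k :=
        mul_le_mul (norm_poch_le a k) (norm_poch_le b k) (norm_nonneg _) (hprnn a k)
      calc ‖poch a k‖ * ‖poch b k‖ / ((k.factorial:ℝ) * ‖poch (c+(m:ℂ)) k‖)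
          ≤ (pr ‖a‖ k * pr ‖b‖ k) / ((k.factorial:ℝ) * (((m:ℝ) - ‖c‖)/M * pr M k)) :=
            div_le_div₀ (mul_nonneg (hprnn a k) (hprnn b k)) hnle hd hdle
      _ = M/((m:ℝ) - ‖c‖) * (pr ‖a‖ k * pr ‖b‖ k / ((k.factorial:ℝ) * pr M k)) := by
            field_simp
    have e_tsum : ∑' n, hterm a b (c+(m:ℂ)) n
        = 1 + ∑' n : ℕ, hterm a b (c+(m:ℂ)) (n+1) := by
      rw [Summable.tsum_eq_zero_add hsum, hterm_zero]
    calc ‖(∑' n, hterm a b (c+(m:ℂ)) n) - 1‖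
        = ‖∑' n : ℕ, hterm a b (c+(m:ℂ)) (n+1)‖ := by rw [e_tsum]; simp
    _ ≤ ∑' n : ℕ, ‖hterm a b (c+(m:ℂ)) (n+1)‖ := norm_tsum_le_tsum_norm hsumn1
    _ ≤ ∑' n : ℕ, M/((m:ℝ) - ‖c‖) * ‖hterm (‖a‖:ℂ) (‖b‖:ℂ) (M:ℂ) (n+1)‖ :=
          Summable.tsum_le_tsum ptbound hsumn1 (hsumM''.mul_left _)
    _ = M/((m:ℝ) - ‖c‖) * W := by rw [tsum_mul_left]
    _ = (M * W) * ((m:ℝ) - ‖c‖)⁻¹ := by rw [div_eq_mul_inv]; ring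
  · have h1 : Tendsto (fun m : ℕ => (m:ℝ) - ‖c‖) atTop atTop :=
      tendsto_atTop_add_const_right _ _ (tendsto_natCast_atTop_atTop)
    simpa using (h1.inv_tendsto_atTop).const_mul (M*W)

open Filter Complex in
set_option maxHeartbeats 1000000 in
theorem gauss_summation' (a b c : ℂ) (h : 0 < (c - a - b).re)
    (hc : ∀ n : ℕ, c ≠ -(n : ℂ)) :
    ∑' n : ℕ, hterm a b c n
      = Complex.Gamma c * Complex.Gamma (c - a - b)
          / (Complex.Gamma (c - a) * Complex.Gamma (c - b)) := by
  set S := ∑' n, hterm a b c n with hSdef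
  have hcab : ∀ n : ℕ, c - a - b ≠ -(n:ℂ) := by
    intro n h'
    have : (c-a-b).re = -(n:ℝ) := by rw [h']; simp
    have hn0 : (0:ℝ) ≤ (n:ℝ) := Nat.cast_nonneg n
    linarith
  have hpc : ∀ m, poch c m ≠ 0 := poch_ne_zero hc
  have hpcab : ∀ m, poch (c-a-b) m ≠ 0 := poch_ne_zero hcab
  by_cases hzero : Complex.Gamma (c-a) = 0 ∨ Complex.Gamma (c-b) = 0
  · rcases hzero with hΓ | hΓ
    · obtain ⟨j, hj⟩ := (Complex.Gamma_eq_zero_iff _).1 hΓ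
      have hpz : poch (c-a) (j+1) = 0 := by
        rw [poch_succ, hj]
        simp
      have hit := iterate_step a b c hc h (j+1)
      rw [hpz, zero_mul, zero_mul] at hit
      have hS0 : S = 0 :=
        (mul_eq_zero.1 hit).resolve_left (mul_ne_zero (hpc _) (hpcab _))
      rw [hΓ, zero_mul, div_zero]
      exact hS0
    · obtain ⟨j, hj⟩ := (Complex.Gamma_eq_zero_iff _).1 hΓ
      have hpz : poch (c-b) (j+1) = 0 := by
        rw [poch_succ, hj]
        simp
      have hit := iterate_step a b c hc h (j+1)
      rw [hpz, mul_zero, zero_mul] at hit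
      have hS0 : S = 0 :=
        (mul_eq_zero.1 hit).resolve_left (mul_ne_zero (hpc _) (hpcab _))
      rw [hΓ, mul_zero, div_zero]
      exact hS0
  · push_neg at hzero
    obtain ⟨hΓa, hΓb⟩ := hzero
    have hca : ∀ n : ℕ, c - a ≠ -(n:ℂ) := fun n h' =>
      hΓa ((Complex.Gamma_eq_zero_iff _).2 ⟨n, h'⟩)
    have hcb : ∀ n : ℕ, c - b ≠ -(n:ℂ) := fun n h' =>
      hΓb ((Complex.Gamma_eq_zero_iff _).2 ⟨n, h'⟩)
    have hpca : ∀ m, poch (c-a) m ≠ 0 := poch_ne_zero hca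
    have hpcb : ∀ m, poch (c-b) m ≠ 0 := poch_ne_zero hcb
    set Q : ℕ → ℂ := fun m =>
      poch (c-a) (m+1) * poch (c-b) (m+1) / (poch c (m+1) * poch (c-a-b) (m+1)) with hQ
    set T : ℕ → ℂ := fun m => ∑' n, hterm a b (c+((m+1:ℕ):ℂ)) n with hT
    have hQS : ∀ m : ℕ, S = Q m * T m := by
      intro m
      have hit := iterate_step a b c hc h (m+1)
      have hne : poch c (m+1) * poch (c-a-b) (m+1) ≠ 0 :=
        mul_ne_zero (hpc _) (hpcab _)
      rw [hQ, hT]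
      simp only
      rw [div_mul_eq_mul_div, eq_div_iff hne]
      linear_combination hit
    -- Q tends to the Gamma quotient
    have hGt : Tendsto (fun m : ℕ => Complex.GammaSeq c m * Complex.GammaSeq (c-a-b) m
        / (Complex.GammaSeq (c-a) m * Complex.GammaSeq (c-b) m)) atTop
        (𝓝 (Complex.Gamma c * Complex.Gamma (c-a-b)
            / (Complex.Gamma (c-a) * Complex.Gamma (c-b)))) :=
      ((Complex.GammaSeq_tendsto_Gamma c).mul (Complex.GammaSeq_tendsto_Gamma (c-a-b))).div
        ((Complex.GammaSeq_tendsto_Gamma (c-a)).mul (Complex.GammaSeq_tendsto_Gamma (c-b)))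
        (mul_ne_zero hΓa hΓb)
    have hQtend : Tendsto Q atTop (𝓝 (Complex.Gamma c * Complex.Gamma (c-a-b)
        / (Complex.Gamma (c-a) * Complex.Gamma (c-b)))) := by
      apply hGt.congr'
      rw [EventuallyEq, eventually_atTop]
      refine ⟨1, fun m hm => ?_⟩
      have hm0 : ((m:ℂ)) ≠ 0 := by
        have : m ≠ 0 := by omega
        exact_mod_cast this
      have hGz : ∀ z : ℂ, Complex.GammaSeq z m = (m:ℂ)^z * (m.factorial : ℂ) / poch z (m+1) := by
        intro z
        rw [Complex.GammaSeq, poch_eq_prod]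
      have hpow : ∀ z : ℂ, (m:ℂ)^z ≠ 0 := by
        intro z
        rw [Complex.cpow_def_of_ne_zero hm0]
        exact Complex.exp_ne_zero _
      have hfac : ((m.factorial : ℂ)) ≠ 0 := Nat.cast_ne_zero.2 (Nat.factorial_ne_zero m)
      have hkey : (m:ℂ)^c * (m:ℂ)^(c-a-b) = (m:ℂ)^(c-a) * (m:ℂ)^(c-b) := by
        rw [← Complex.cpow_add _ _ hm0, ← Complex.cpow_add _ _ hm0]
        congr 1
        ring
      have eq1 : Complex.GammaSeq c m * Complex.GammaSeq (c-a-b) m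
          / (Complex.GammaSeq (c-a) m * Complex.GammaSeq (c-b) m)
          = ((m:ℂ)^c * (m:ℂ)^(c-a-b)) / ((m:ℂ)^(c-a) * (m:ℂ)^(c-b))
            * (poch (c-a) (m+1) * poch (c-b) (m+1)
              / (poch c (m+1) * poch (c-a-b) (m+1))) := by
        rw [hGz, hGz, hGz, hGz]
        field_simp [hpow c, hpow (c-a), hpow (c-b), hpow (c-a-b), hfac,
          hpc (m+1), hpcab (m+1), hpca (m+1), hpcb (m+1)]
      rw [eq1, hkey, div_self (mul_ne_zero (hpow _) (hpow _)), one_mul, hQ]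
    have hTtend : Tendsto T atTop (𝓝 1) := by
      have := (tail_tendsto a b c hc h).comp (tendsto_add_atTop_nat 1)
      exact this.congr fun m => rfl
    have hcomb := hQtend.mul hTtend
    rw [mul_one] at hcomb
    have hconst : Tendsto (fun _ : ℕ => S) atTop (𝓝 S) := tendsto_const_nhds
    have : Tendsto (fun m : ℕ => Q m * T m) atTop (𝓝 S) := by
      apply hconst.congr
      intro m
      exact hQS m
    exact tendsto_nhds_unique this hcomb


/-- Gauss's summation theorem for the ₂F₁ series at 1. -/
theorem gauss_summation (a b c : ℂ) (h : 0 < (c - a - b).re)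
    (hc : ∀ n : ℕ, c ≠ -(n : ℂ)) :
    ∑' n : ℕ, poch a n * poch b n / ((Nat.factorial n : ℂ) * poch c n)
      = Complex.Gamma c * Complex.Gamma (c - a - b)
          / (Complex.Gamma (c - a) * Complex.Gamma (c - b)) := by
  exact gauss_summation' a b c h hc
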